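/- Let G be a graph with a fractional offshoot-assignment (L,o), and for every pair of disjoint subsets X, O of V(G) let f_{X,O} be a demand function for G − X. If G − X has a fractional f_{X,O}-arborization respecting O for every such pair, and for every vertex v the sum over all pairs (X,O) with v ∉ X of f_{X,O}(v) times the measure of C_{X,O} is at least 1, where C_{X,O} = ((⋂_{u∉X} L(u)∖o(u)) ∩ (⋂_{u∈O} o(u))) ∖ (⋃_{u∈X} L(u)), then G has a fractional (L,o)-arborization. -/

import Mathlib

open MeasureTheory

variable {V : Type*}

/-- `φ` is a fractional `k`-arborization of `G`: each vertex gets a measurable subset of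
`(0, k)` of Lebesgue measure one, and every level set induces a forest. -/
def FracArb (G : SimpleGraph V) (k : ℝ) (φ : V → Set ℝ) : Prop :=
  (∀ v, MeasurableSet (φ v)) ∧ (∀ v, φ v ⊆ Set.Ioo 0 k) ∧ (∀ v, volume (φ v) = 1) ∧
    ∀ α : ℝ, (G.induce {v | α ∈ φ v}).IsAcyclic

/-- `G` has a fractional `k`-arborization. -/
def HasFracArb (G : SimpleGraph V) (k : ℝ) : Prop := ∃ φ, FracArb G k φ

/-- The fractional vertex-arboricity of `G`. -/
noncomputable def fva (G : SimpleGraph V) : ℝ := sInf {k : ℝ | 0 < k ∧ HasFracArb G k}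

/-- The vertex-arboricity of `G`: least `k` admitting a partition into `k` forests. -/
noncomputable def va (G : SimpleGraph V) : ℕ :=
  sInf {k : ℕ | ∃ c : V → Fin k, ∀ i, (G.induce {v | c v = i}).IsAcyclic}

/-- The maximum size of a set of vertices inducing a forest in `G`. -/
noncomputable def maxIndForest (G : SimpleGraph V) [Fintype V] : ℕ :=
  sSup {n : ℕ | ∃ S : Finset V, (G.induce (S : Set V)).IsAcyclic ∧ S.card = n}

/-- `H` is a minor of `G` (branch-set formulation). -/
def IsMinor {α : Type*} {β : Type*} (H : SimpleGraph α) (G : SimpleGraph β) : Prop :=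
  ∃ f : α → Set β, (∀ a, (f a).Nonempty) ∧ (∀ a, (G.induce (f a)).Connected) ∧
    (Pairwise fun a b => Disjoint (f a) (f b)) ∧
    ∀ a b, H.Adj a b → ∃ x ∈ f a, ∃ y ∈ f b, G.Adj x y

/-- Planarity, via Wagner's theorem: no `K₅` minor and no `K₃,₃` minor. -/
def Planar (G : SimpleGraph V) : Prop :=
  ¬ IsMinor (SimpleGraph.completeGraph (Fin 5)) G ∧
    ¬ IsMinor (completeBipartiteGraph (Fin 3) (Fin 3)) G

/-- Number of neighbors of `v` of degree at least three. -/
def effDeg (G : SimpleGraph V) [Fintype V] [DecidableRel G.Adj] (v : V) : ℕ :=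
  ((G.neighborFinset v).filter fun u => 3 ≤ G.degree u).card

/-- `v` is light: effective degree at most three and degree at most five. -/
def Light (G : SimpleGraph V) [Fintype V] [DecidableRel G.Adj] (v : V) : Prop :=
  effDeg G v ≤ 3 ∧ G.degree v ≤ 5

/-- `G` is `k`-arborically critical. -/
def ArbCritical (G : SimpleGraph V) (k : ℚ) : Prop :=
  (k : ℝ) < fva G ∧ ∀ H : G.Subgraph, H ≠ ⊤ → fva H.coe ≤ (k : ℝ)

instance (G : SimpleGraph V) [Fintype V] [DecidableRel G.Adj] (v : V) :
    Decidable (Light G v) := inferInstanceAs (Decidable (_ ∧ _))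

section Aux
open Set Filter Topology
open MeasureTheory Set Filter Topology

lemma transfer (C : Set ℝ) (hC : MeasurableSet C) (hfin : volume C ≠ ⊤) :
    ∃ g : ℝ → ℝ, Measurable g ∧ ∀ A : Set ℝ, MeasurableSet A →
      volume (C ∩ g ⁻¹' A) = volume C * volume (A ∩ Set.Icc 0 1) := by
  by_cases h0 : volume C = 0
  · refine ⟨fun _ => 0, measurable_const, fun A hA => ?_⟩
    have h1 : volume (C ∩ (fun _ => (0:ℝ)) ⁻¹' A) ≤ volume C :=
      measure_mono inter_subset_left
    rw [h0, zero_mul]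
    exact le_antisymm (h1.trans_eq h0) zero_le
  set μ := volume.restrict C with hμ
  have hfinμ : IsFiniteMeasure μ :=
    ⟨by rw [hμ, Measure.restrict_apply_univ]; exact hfin.lt_top⟩
  set m := (volume C).toReal with hmdef
  have hm : 0 < m := ENNReal.toReal_pos h0 hfin
  have hμuniv : μ univ = volume C := by rw [hμ, Measure.restrict_apply_univ]
  set F : ℝ → ℝ := fun t => (μ (Iic t)).toReal with hF
  have hFmono : Monotone F := fun a b hab =>
    ENNReal.toReal_mono (measure_ne_top μ _) (measure_mono (Iic_subset_Iic.2 hab))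
  have hlipkey : ∀ a b : ℝ, a ≤ b → F b - F a ≤ b - a := by
    intro a b hab
    have hsplit : μ (Iic b) = μ (Iic a) + μ (Ioc a b) := by
      rw [← measure_union (Iic_disjoint_Ioc le_rfl) measurableSet_Ioc,
        Iic_union_Ioc_eq_Iic hab]
    have hle : μ (Ioc a b) ≤ ENNReal.ofReal (b - a) := by
      calc μ (Ioc a b) ≤ volume (Ioc a b) := by
            rw [hμ]; exact Measure.restrict_le_self _
        _ = ENNReal.ofReal (b - a) := Real.volume_Ioc
    have : F b = F a + (μ (Ioc a b)).toReal := by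
      rw [hF]; simp only; rw [hsplit, ENNReal.toReal_add (measure_ne_top μ _) (measure_ne_top μ _)]
    rw [this]
    have := ENNReal.toReal_mono (by simp) hle
    rw [ENNReal.toReal_ofReal (by linarith)] at this
    linarith
  have hcont : Continuous F := by
    refine (LipschitzWith.of_dist_le_mul (K := 1) fun a b => ?_).continuous
    rcases le_total a b with h | h
    · rw [Real.dist_eq, Real.dist_eq, abs_of_nonpos (by linarith [hFmono h]),
        abs_of_nonpos (by linarith)]
      have := hlipkey a b h; push_cast; linarith
    · rw [Real.dist_eq, Real.dist_eq, abs_of_nonneg (by linarith [hFmono h]),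
        abs_of_nonneg (by linarith)]
      have := hlipkey b a h; push_cast; linarith
  have hF0 : ∀ t, 0 ≤ F t := fun t => ENNReal.toReal_nonneg
  have hFm : ∀ t, F t ≤ m := fun t => by
    rw [hmdef, ← hμuniv]
    exact ENNReal.toReal_mono (measure_ne_top μ _) (measure_mono (subset_univ _))
  have htop : Tendsto F atTop (𝓝 m) := by
    have h1 := tendsto_measure_Iic_atTop μ
    rw [hμuniv] at h1
    exact (ENNReal.tendsto_toReal hfin).comp h1
  -- key claim
  have hkey : ∀ y : ℝ, μ {t | F t ≤ y} = ENNReal.ofReal (min y m) := by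
    intro y
    rcases lt_or_ge y 0 with hy | hy
    · have hs : {t | F t ≤ y} = ∅ := by
        ext t; simp only [mem_setOf_eq, mem_empty_iff_false, iff_false, not_le]
        exact hy.trans_le (hF0 t)
      rw [hs, measure_empty, min_eq_left (by linarith), ENNReal.ofReal_eq_zero.2 hy.le]
    rcases le_or_gt m y with hym | hym
    · have hs : {t | F t ≤ y} = univ := eq_univ_of_forall fun t => (hFm t).trans hym
      rw [hs, hμuniv, min_eq_right hym, hmdef, ENNReal.ofReal_toReal hfin]
    -- 0 ≤ y < m
    rw [min_eq_left hym.le]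
    by_cases hne : {t | F t ≤ y}.Nonempty
    · have hbdd : BddAbove {t | F t ≤ y} := by
        obtain ⟨T, hT⟩ := (htop.eventually (eventually_gt_nhds hym)).exists
        exact ⟨T, fun t ht => le_of_not_gt fun h => absurd (hFmono h.le) (by simp only [mem_setOf_eq] at ht; intro hc; linarith)⟩
      have hclosed : IsClosed {t | F t ≤ y} := isClosed_le hcont continuous_const
      set t₀ := sSup {t | F t ≤ y} with ht₀def
      have ht₀mem : t₀ ∈ {t | F t ≤ y} := hclosed.csSup_mem hne hbdd
      have hseq : {t | F t ≤ y} = Iic t₀ := by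
        apply subset_antisymm
        · exact fun t ht => le_csSup hbdd ht
        · exact fun t ht => le_trans (hFmono ht) ht₀mem
      have hFt₀ : F t₀ = y := by
        refine le_antisymm ht₀mem (le_of_not_gt fun hlt => ?_)
        have hopen : IsOpen {t | F t < y} := isOpen_lt hcont continuous_const
        obtain ⟨ε, hε, hball⟩ := Metric.isOpen_iff.mp hopen t₀ hlt
        have hmem : t₀ + ε / 2 ∈ {t | F t < y} := by
          apply hball
          rw [Metric.mem_ball, Real.dist_eq]
          rw [abs_of_nonneg (by linarith)]; linarith
        have hmem' : F (t₀ + ε / 2) ≤ y := le_of_lt hmem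
        have := le_csSup hbdd (show t₀ + ε / 2 ∈ {t | F t ≤ y} from hmem')
        linarith
      rw [hseq]
      have : μ (Iic t₀) = ENNReal.ofReal (F t₀) := by
        rw [hF]; simp only; rw [ENNReal.ofReal_toReal (measure_ne_top μ _)]
      rw [this, hFt₀]
    · -- empty: y must be 0
      have hy0 : y = 0 := by
        by_contra hne0
        have hypos : 0 < y := lt_of_le_of_ne hy (Ne.symm hne0)
        -- find t with F t < y via tendsto of μ (Iic (-n)) → 0
        have hinter : ⋂ n : ℕ, Iic (-(n:ℝ)) = (∅ : Set ℝ) := by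
          ext t
          simp only [mem_iInter, mem_Iic, mem_empty_iff_false, iff_false, not_forall, not_le]
          obtain ⟨n, hn⟩ := exists_nat_gt (-t)
          exact ⟨n, by linarith⟩
        have htend : Tendsto (μ ∘ fun n : ℕ => Iic (-(n:ℝ))) atTop (𝓝 (μ (⋂ n : ℕ, Iic (-(n:ℝ))))) :=
          tendsto_measure_iInter_atTop (fun n => measurableSet_Iic.nullMeasurableSet)
            (fun a b hab => Iic_subset_Iic.2 (neg_le_neg (Nat.cast_le.2 hab)))
            ⟨0, measure_ne_top μ _⟩
        rw [hinter, measure_empty] at htend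
        have := (htend.eventually (eventually_lt_nhds (show (0 : ENNReal) < ENNReal.ofReal y by
          simp [hypos]))).exists
        obtain ⟨n, hn⟩ := this
        have hFn : F (-(n:ℝ)) < y := by
          have h2 := (ENNReal.toReal_lt_toReal (measure_ne_top μ _) ENNReal.ofReal_ne_top).2 hn
          rwa [ENNReal.toReal_ofReal hypos.le] at h2
        exact hne ⟨-(n:ℝ), hFn.le⟩
      rw [not_nonempty_iff_eq_empty] at hne
      rw [hne, measure_empty, hy0, ENNReal.ofReal_zero]
  -- define g
  refine ⟨fun t => F t / m, (hcont.measurable).div_const m, fun A hA => ?_⟩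
  set g : ℝ → ℝ := fun t => F t / m with hg
  have hgmeas : Measurable g := (hcont.measurable).div_const m
  have hmap : Measure.map g μ = (volume C) • (volume.restrict (Icc 0 1)) := by
    have : IsFiniteMeasure (Measure.map g μ) := by
      constructor
      rw [Measure.map_apply hgmeas MeasurableSet.univ]
      exact (measure_ne_top μ _).lt_top
    refine Measure.ext_of_Iic _ _ fun x => ?_
    rw [Measure.map_apply hgmeas measurableSet_Iic]
    have hpre : g ⁻¹' (Iic x) = {t | F t ≤ x * m} := by
      ext t
      simp only [hg, mem_preimage, mem_Iic, mem_setOf_eq, div_le_iff₀ hm]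
    rw [hpre, hkey]
    rw [Measure.smul_apply, Measure.restrict_apply measurableSet_Iic, smul_eq_mul]
    have hIcc : Iic x ∩ Icc (0:ℝ) 1 = Icc 0 (min x 1) := by
      ext t
      simp only [mem_inter_iff, mem_Iic, mem_Icc, le_min_iff, mem_Icc]
      constructor
      · rintro ⟨h1, h2, h3⟩; exact ⟨h2, h1, h3⟩
      · rintro ⟨h1, h2, h3⟩; exact ⟨h2, h1, h3⟩
    rw [hIcc, Real.volume_Icc, hmdef, ← ENNReal.ofReal_toReal hfin, ← hmdef,
      ← ENNReal.ofReal_mul hm.le]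
    congr 1
    rw [ENNReal.toReal_ofReal hm.le]
    rcases le_total x 1 with h | h
    · rw [min_eq_left (by nlinarith), min_eq_left h]; ring
    · rw [min_eq_right (by nlinarith), min_eq_right h]; ring
  have h1 : volume (C ∩ g ⁻¹' A) = μ (g ⁻¹' A) := by
    rw [hμ, Measure.restrict_apply (hgmeas hA), Set.inter_comm]
  rw [h1, ← Measure.map_apply hgmeas hA, hmap, Measure.smul_apply,
    Measure.restrict_apply hA, smul_eq_mul]
open MeasureTheory Set Filter Topology

lemma acyclic_transfer {α β : Type*} {A : SimpleGraph α} {B : SimpleGraph β}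
    (hB : B.IsAcyclic) (f : α → β) (hinj : Function.Injective f)
    (hadj : ∀ a b, A.Adj a b → B.Adj (f a) (f b)) : A.IsAcyclic := by
  intro v c hc
  exact hB (SimpleGraph.Walk.map ⟨f, fun h => hadj _ _ h⟩ c)
    ((SimpleGraph.Walk.map_isCycle_iff_of_injective hinj).2 hc)

lemma induce_empty_acyclic {V : Type*} (G : SimpleGraph V) :
    (G.induce (∅ : Set V)).IsAcyclic := by
  intro v c hc
  exact absurd v.2 (Set.notMem_empty _)

end Aux

/-- The set `C_{X,O}` from Proposition 2.5. -/
def Cset [Fintype V] [DecidableEq V] (L o : V → Set ℝ) (X O : Finset V) : Set ℝ :=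
  ((⋂ u ∈ (Xᶜ : Finset V), (L u \ o u)) ∩ ⋂ u ∈ O, o u) \ ⋃ u ∈ X, L u

/-- Proposition 2.5: sufficient conditions for a fractional `(L, o)`-arborization. -/
theorem stmt12 (G : SimpleGraph V) [Fintype V] [DecidableEq V]
    (L o : V → Set ℝ)
    (hL : ∀ v, MeasurableSet (L v)) (ho : ∀ v, MeasurableSet (o v))
    (hoL : ∀ v, o v ⊆ L v)
    (f : Finset V → Finset V → V → ℚ)
    (hf : ∀ X O v, 0 ≤ f X O v ∧ f X O v ≤ 1)
    (harb : ∀ X O : Finset V, Disjoint X O →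
      ∃ φ : {v : V // v ∉ X} → Set ℝ,
        (∀ v, MeasurableSet (φ v) ∧ φ v ⊆ Set.Icc 0 1 ∧
          ENNReal.ofReal (f X O v.1 : ℝ) ≤ volume (φ v)) ∧
        (∀ α : ℝ, ((G.induce {v : V | v ∉ X}).induce {v | α ∈ φ v}).IsAcyclic) ∧
        (∀ x y : {v : V // v ∉ X}, x.1 ∈ O → y.1 ∈ O → x ≠ y →
          ∀ p : (G.induce {v : V | v ∉ X}).Walk x y, p.IsPath →
            ⋂ u ∈ p.support, φ u = ∅))
    (hcov : ∀ v : V,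
      1 ≤ ∑ X : Finset V, ∑ O : Finset V,
        if v ∉ X ∧ Disjoint X O then
          (f X O v : ℝ) * (volume (Cset L o X O)).toReal else 0) :
    ∃ φ : V → Set ℝ,
      (∀ v, MeasurableSet (φ v) ∧ φ v ⊆ L v ∧ 1 ≤ volume (φ v)) ∧
      (∀ α : ℝ, (G.induce {v | α ∈ φ v}).IsAcyclic) ∧
      (∀ x y : V, x ≠ y → ∀ p : G.Walk x y, p.IsPath →
        (o x ∩ o y) ∩ ⋂ u ∈ p.support, φ u = ∅) := by
  classical
  have h1 : ∀ X : Finset V, ∃ φ : {v : V // v ∉ X} → Set ℝ,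
      (∀ v, MeasurableSet (φ v) ∧ φ v ⊆ Set.Icc 0 1 ∧
        ENNReal.ofReal (f X ∅ v.1 : ℝ) ≤ volume (φ v)) ∧
      (∀ α : ℝ, ((G.induce {v : V | v ∉ X}).induce {v | α ∈ φ v}).IsAcyclic) ∧
      (∀ x y : {v : V // v ∉ X}, x.1 ∈ (∅ : Finset V) → y.1 ∈ (∅ : Finset V) → x ≠ y →
        ∀ p : (G.induce {v : V | v ∉ X}).Walk x y, p.IsPath →
          ⋂ u ∈ p.support, φ u = ∅) :=
    fun X => harb X ∅ (Finset.disjoint_empty_right X)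
  choose φ0 hφ0 hφacyc _h using h1
  set ψ : Finset V → V → Set ℝ :=
    fun X v => if h : v ∉ X then φ0 X ⟨v, h⟩ else ∅ with hψdef
  have hψmeas : ∀ X v, MeasurableSet (ψ X v) := by
    intro X v
    by_cases h : v ∉ X
    · rw [hψdef]; simp only [dif_pos h]; exact (hφ0 X ⟨v, h⟩).1
    · rw [hψdef]; simp only [dif_neg h]; exact MeasurableSet.empty
  have hψsub : ∀ X v, ψ X v ⊆ Set.Icc 0 1 := by
    intro X v
    by_cases h : v ∉ X
    · rw [hψdef]; simp only [dif_pos h]; exact (hφ0 X ⟨v, h⟩).2.1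
    · rw [hψdef]; simp only [dif_neg h]; exact Set.empty_subset _
  have hψvol : ∀ X v, (h : v ∉ X) →
      ENNReal.ofReal (f X ∅ v : ℝ) ≤ volume (ψ X v) := by
    intro X v h
    rw [hψdef]; simp only [dif_pos h]; exact (hφ0 X ⟨v, h⟩).2.2
  set C : Finset V → Set ℝ := fun X => Cset L o X ∅ with hCdef
  have hCmeas : ∀ X : Finset V, MeasurableSet (C X) := by
    intro X
    refine MeasurableSet.diff (MeasurableSet.inter ?_ ?_) ?_
    · exact MeasurableSet.iInter fun u => MeasurableSet.iInter fun _ => (hL u).diff (ho u)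
    · exact MeasurableSet.iInter fun u => MeasurableSet.iInter fun _ => ho u
    · exact MeasurableSet.iUnion fun u => MeasurableSet.iUnion fun _ => hL u
  have hCL : ∀ (X : Finset V) (v : V), v ∉ X → ∀ α ∈ C X, α ∈ L v ∧ α ∉ o v := by
    intro X v hv α hα
    have h2 := hα.1.1
    rw [Set.mem_iInter₂] at h2
    have h3 := h2 v (Finset.mem_compl.2 hv)
    exact ⟨h3.1, h3.2⟩
  have hCnotL : ∀ (X : Finset V) (v : V), v ∈ X → ∀ α ∈ C X, α ∉ L v := by
    intro X v hv α hα hαL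
    exact hα.2 (Set.mem_biUnion hv hαL)
  have hCdisj : ∀ X Y : Finset V, X ≠ Y → Disjoint (C X) (C Y) := by
    intro X Y hXY
    rw [Set.disjoint_left]
    intro α hαX hαY
    have hex : ∃ u, (u ∈ X ∧ u ∉ Y) ∨ (u ∉ X ∧ u ∈ Y) := by
      by_contra hcon
      push_neg at hcon
      exact hXY (Finset.ext fun u => by have := hcon u; tauto)
    obtain ⟨u, hu | hu⟩ := hex
    · exact hCnotL X u hu.1 α hαX (hCL Y u hu.2 α hαY).1
    · exact hCnotL Y u hu.2 α hαY (hCL X u hu.1 α hαX).1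
  have hgex : ∀ X : Finset V, ∃ g : ℝ → ℝ, Measurable g ∧ (volume (C X) ≠ ⊤ →
      ∀ A, MeasurableSet A →
        volume (C X ∩ g ⁻¹' A) = volume (C X) * volume (A ∩ Set.Icc 0 1)) := by
    intro X
    by_cases hfin : volume (C X) = ⊤
    · exact ⟨fun _ => 0, measurable_const, fun h => absurd hfin h⟩
    · obtain ⟨g, hg1, hg2⟩ := transfer (C X) (hCmeas X) hfin
      exact ⟨g, hg1, fun _ => hg2⟩
  choose g hgmeas hgp using hgex
  set T : V → Finset (Finset V) :=
    fun v => Finset.univ.filter (fun X => v ∉ X ∧ volume (C X) ≠ ⊤) with hTdef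
  have hTmem : ∀ v X, X ∈ T v ↔ (v ∉ X ∧ volume (C X) ≠ ⊤) := by
    intro v X; rw [hTdef]; simp
  set Φ : V → Set ℝ := fun v => ⋃ X ∈ T v, (C X ∩ g X ⁻¹' ψ X v) with hΦdef
  have hΦmem : ∀ v α, α ∈ Φ v ↔ ∃ X ∈ T v, α ∈ C X ∩ g X ⁻¹' ψ X v := by
    intro v α; rw [hΦdef]; simp only [Set.mem_iUnion, exists_prop]
  -- the Cset for nonempty O is empty
  have hCO : ∀ X O : Finset V, O ≠ ∅ → Disjoint X O → Cset L o X O = ∅ := by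
    intro X O hO hd
    obtain ⟨u, hu⟩ := Finset.nonempty_iff_ne_empty.2 hO
    rw [Set.eq_empty_iff_forall_notMem]
    intro α hα
    have huX : u ∉ X := Finset.disjoint_right.1 hd hu
    have h2 := hα.1.1
    rw [Set.mem_iInter₂] at h2
    have h3 := h2 u (Finset.mem_compl.2 huX)
    have h4 := hα.1.2
    rw [Set.mem_iInter₂] at h4
    exact h3.2 (h4 u hu)
  -- reduce hcov to a sum over T v
  have hcov2 : ∀ v : V, (1:ℝ) ≤ ∑ X ∈ T v, (f X ∅ v : ℝ) * (volume (C X)).toReal := by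
    intro v
    have step1 : ∀ X : Finset V,
        (∑ O : Finset V, if v ∉ X ∧ Disjoint X O then
          (f X O v : ℝ) * (volume (Cset L o X O)).toReal else 0)
        = if v ∉ X then (f X ∅ v : ℝ) * (volume (C X)).toReal else 0 := by
      intro X
      rw [Finset.sum_eq_single ∅]
      · by_cases h : v ∉ X
        · rw [if_pos ⟨h, Finset.disjoint_empty_right X⟩, if_pos h, hCdef]
        · rw [if_neg (fun hc => h hc.1), if_neg h]
      · intro O _ hO
        by_cases h : v ∉ X ∧ Disjoint X O
        · rw [if_pos h, hCO X O hO h.2, measure_empty, ENNReal.toReal_zero, mul_zero]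
        · rw [if_neg h]
      · intro h; exact absurd (Finset.mem_univ _) h
    have h2 := hcov v
    rw [Finset.sum_congr rfl (fun X _ => step1 X)] at h2
    rw [← Finset.sum_subset (Finset.subset_univ (T v))] at h2
    · calc (1:ℝ) ≤ _ := h2
        _ = ∑ X ∈ T v, (f X ∅ v : ℝ) * (volume (C X)).toReal := by
          refine Finset.sum_congr rfl fun X hX => ?_
          rw [if_pos ((hTmem v X).1 hX).1]
    · intro X _ hX
      rw [hTmem v X] at hX
      push_neg at hX
      by_cases h : v ∉ X
      · rw [if_pos h, hX h, ENNReal.toReal_top, mul_zero]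
      · rw [if_neg h]
  -- key facts about Φ
  have hΦL : ∀ v, Φ v ⊆ L v ∧ ∀ α ∈ Φ v, α ∉ o v := by
    intro v
    constructor
    · intro α hα
      obtain ⟨X, hX, hα⟩ := (hΦmem v α).1 hα
      exact (hCL X v ((hTmem v X).1 hX).1 α hα.1).1
    · intro α hα
      obtain ⟨X, hX, hα⟩ := (hΦmem v α).1 hα
      exact (hCL X v ((hTmem v X).1 hX).1 α hα.1).2
  have hΦmeas : ∀ v, MeasurableSet (Φ v) := by
    intro v
    rw [hΦdef]
    exact MeasurableSet.biUnion (Finset.countable_toSet _)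
      (fun X _ => (hCmeas X).inter (hgmeas X (hψmeas X v)))
  have hΦvol : ∀ v, 1 ≤ volume (Φ v) := by
    intro v
    have hdisj : (↑(T v) : Set (Finset V)).PairwiseDisjoint
        (fun X => C X ∩ g X ⁻¹' ψ X v) := by
      intro X _ Y _ hXY
      exact (hCdisj X Y hXY).mono Set.inter_subset_left Set.inter_subset_left
    have hsum : volume (Φ v) = ∑ X ∈ T v, volume (C X ∩ g X ⁻¹' ψ X v) := by
      rw [hΦdef]
      exact measure_biUnion_finset hdisj
        (fun X _ => (hCmeas X).inter (hgmeas X (hψmeas X v)))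
    rw [hsum]
    have hterm : ∀ X ∈ T v, ENNReal.ofReal ((f X ∅ v : ℝ) * (volume (C X)).toReal)
        ≤ volume (C X ∩ g X ⁻¹' ψ X v) := by
      intro X hX
      obtain ⟨hvX, hfin⟩ := (hTmem v X).1 hX
      rw [hgp X hfin (ψ X v) (hψmeas X v), Set.inter_eq_left.2 (hψsub X v)]
      calc ENNReal.ofReal ((f X ∅ v : ℝ) * (volume (C X)).toReal)
          = ENNReal.ofReal ((volume (C X)).toReal) * ENNReal.ofReal (f X ∅ v : ℝ) := by
            rw [← ENNReal.ofReal_mul ENNReal.toReal_nonneg, mul_comm]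
        _ = volume (C X) * ENNReal.ofReal (f X ∅ v : ℝ) := by
            rw [ENNReal.ofReal_toReal hfin]
        _ ≤ volume (C X) * volume (ψ X v) := by
            exact mul_le_mul_right (hψvol X v hvX) _
    calc (1 : ENNReal) = ENNReal.ofReal 1 := by simp
      _ ≤ ENNReal.ofReal (∑ X ∈ T v, (f X ∅ v : ℝ) * (volume (C X)).toReal) :=
          ENNReal.ofReal_le_ofReal (hcov2 v)
      _ = ∑ X ∈ T v, ENNReal.ofReal ((f X ∅ v : ℝ) * (volume (C X)).toReal) :=
          ENNReal.ofReal_sum_of_nonneg (fun X _ => mul_nonneg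
            (by exact_mod_cast (hf X ∅ v).1) ENNReal.toReal_nonneg)
      _ ≤ ∑ X ∈ T v, volume (C X ∩ g X ⁻¹' ψ X v) := Finset.sum_le_sum hterm
  refine ⟨Φ, fun v => ⟨hΦmeas v, (hΦL v).1, hΦvol v⟩, ?_, ?_⟩
  · -- acyclicity of level sets
    intro α
    by_cases hex : ∃ X : Finset V, α ∈ C X ∧ volume (C X) ≠ ⊤
    · obtain ⟨X₀, hαX₀, hfin₀⟩ := hex
      set β := g X₀ α with hβ
      have hset : {v | α ∈ Φ v} = {v | v ∉ X₀ ∧ β ∈ ψ X₀ v} := by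
        ext v
        simp only [Set.mem_setOf_eq]
        constructor
        · intro hv
          obtain ⟨X, hX, hα⟩ := (hΦmem v α).1 hv
          have hXX₀ : X = X₀ := by
            by_contra hne
            exact Set.disjoint_left.1 (hCdisj X X₀ hne) hα.1 hαX₀
          subst hXX₀
          exact ⟨((hTmem v X).1 hX).1, hα.2⟩
        · rintro ⟨hv, hβv⟩
          exact (hΦmem v α).2 ⟨X₀, (hTmem v X₀).2 ⟨hv, hfin₀⟩, hαX₀, hβv⟩
      rw [hset]
      refine acyclic_transfer (hφacyc X₀ β)
        (fun a => (⟨⟨a.1, a.2.1⟩, ?_⟩ :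
          {w : {v : V // v ∈ {v : V | v ∉ X₀}} // w ∈ {w | β ∈ φ0 X₀ w}}))
        ?_ ?_
      · have h2 := a.2.2
        simp only [hψdef, a.2.1, not_false_iff, dif_pos] at h2
        exact h2
      · intro a b hab
        have : a.1 = b.1 := congrArg (fun w => w.1.1) hab
        exact Subtype.ext this
      · intro a b hab
        exact hab
    · have hset : {v | α ∈ Φ v} = (∅ : Set V) := by
        rw [Set.eq_empty_iff_forall_notMem]
        intro v hv
        obtain ⟨X, hX, hα⟩ := (hΦmem v α).1 hv
        exact hex ⟨X, hα.1, ((hTmem v X).1 hX).2⟩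
      rw [hset]
      exact induce_empty_acyclic G
  · -- offshoot condition
    intro x y _ p _
    rw [Set.eq_empty_iff_forall_notMem]
    intro α hα
    have hαx : α ∈ Φ x := by
      have h2 := hα.2
      rw [Set.mem_iInter₂] at h2
      exact h2 x p.start_mem_support
    exact (hΦL x).2 α hαx hα.1.1
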